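/- There exists a unique θ ∈ ℝ^q satisfying the projected Bellman fixed-point equation Φθ = Π(R + γ·P·Φθ), and this θ is the unique global minimizer of the mean-square projected Bellman error MSPBE(θ) := (1/2)‖Π(R + γPΦθ) − Φθ‖²_D. -/
import Mathlib

open Matrix

/-- The `D`-weighted norm `‖x‖_D = √(xᵀ D x)` with `D = diag d`. -/
noncomputable def wNorm {S : Type*} [Fintype S] [DecidableEq S]
    (d : S → ℝ) (x : S → ℝ) : ℝ :=
  Real.sqrt (x ⬝ᵥ (Matrix.diagonal d *ᵥ x))

lemma quad_eq {S : Type*} [Fintype S] [DecidableEq S] (d x : S → ℝ) :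
    x ⬝ᵥ (Matrix.diagonal d *ᵥ x) = ∑ s, d s * x s ^ 2 := by
  simp only [dotProduct, Matrix.mulVec_diagonal]
  refine Finset.sum_congr rfl fun s _ => by ring

lemma dot_diag {S : Type*} [Fintype S] [DecidableEq S] (d y z : S → ℝ) :
    y ⬝ᵥ (Matrix.diagonal d *ᵥ z) = ∑ s, d s * (y s * z s) := by
  simp only [dotProduct, Matrix.mulVec_diagonal]
  refine Finset.sum_congr rfl fun s _ => by ring

lemma quad_pos {S : Type*} [Fintype S] [DecidableEq S] {d x : S → ℝ}
    (hd : ∀ s, 0 < d s) (hx : x ≠ 0) : 0 < ∑ s, d s * x s ^ 2 := by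
  obtain ⟨s0, hs0⟩ : ∃ s, x s ≠ 0 := by
    by_contra h; push_neg at h; exact hx (funext h)
  have : ∀ s ∈ Finset.univ, 0 ≤ d s * x s ^ 2 :=
    fun s _ => mul_nonneg (hd s).le (sq_nonneg _)
  refine Finset.sum_pos' this ⟨s0, Finset.mem_univ _, ?_⟩
  exact mul_pos (hd s0) (by positivity)

lemma weighted_cs {S : Type*} [Fintype S] {d y z : S → ℝ} (hd : ∀ s, 0 ≤ d s) :
    (∑ s, d s * (y s * z s)) ^ 2 ≤ (∑ s, d s * y s ^ 2) * ∑ s, d s * z s ^ 2 := by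
  have h := Finset.sum_mul_sq_le_sq_mul_sq Finset.univ
    (fun s => Real.sqrt (d s) * y s) (fun s => Real.sqrt (d s) * z s)
  have e : ∀ s : S, (Real.sqrt (d s) * y s) * (Real.sqrt (d s) * z s)
      = d s * (y s * z s) := fun s => by
    rw [show (Real.sqrt (d s) * y s) * (Real.sqrt (d s) * z s)
        = (Real.sqrt (d s) * Real.sqrt (d s)) * (y s * z s) by ring,
      Real.mul_self_sqrt (hd s)]
  have e2 : ∀ s : S, (Real.sqrt (d s) * y s) ^ 2 = d s * y s ^ 2 := fun s => by
    rw [mul_pow, Real.sq_sqrt (hd s)]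
  have e3 : ∀ s : S, (Real.sqrt (d s) * z s) ^ 2 = d s * z s ^ 2 := fun s => by
    rw [mul_pow, Real.sq_sqrt (hd s)]
  simpa only [e, e2, e3] using h

lemma contraction {S : Type*} [Fintype S] {P : Matrix S S ℝ} {d : S → ℝ}
    (hP0 : ∀ i j, 0 ≤ P i j) (hP1 : ∀ i, ∑ j, P i j = 1)
    (hstat : ∀ s', ∑ s, d s * P s s' = d s') (hd : ∀ s, 0 ≤ d s) (y : S → ℝ) :
    ∑ s, d s * (P *ᵥ y) s ^ 2 ≤ ∑ s, d s * y s ^ 2 := by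
  have step : ∀ s : S, (P *ᵥ y) s ^ 2 ≤ ∑ s', P s s' * y s' ^ 2 := by
    intro s
    have h := weighted_cs (d := fun s' => P s s') (y := fun _ => (1:ℝ)) (z := y)
      (fun s' => hP0 s s')
    simp only [one_mul, mul_one, one_pow] at h
    calc (P *ᵥ y) s ^ 2 = (∑ s', P s s' * y s') ^ 2 := by rfl
      _ ≤ (∑ s', P s s') * ∑ s', P s s' * y s' ^ 2 := h
      _ = ∑ s', P s s' * y s' ^ 2 := by rw [hP1 s, one_mul]
  calc ∑ s, d s * (P *ᵥ y) s ^ 2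
      ≤ ∑ s, d s * ∑ s', P s s' * y s' ^ 2 :=
        Finset.sum_le_sum fun s _ => mul_le_mul_of_nonneg_left (step s) (hd s)
    _ = ∑ s', (∑ s, d s * P s s') * y s' ^ 2 := by
        simp only [Finset.mul_sum, Finset.sum_mul]
        rw [Finset.sum_comm]
        exact Finset.sum_congr rfl fun s' _ => Finset.sum_congr rfl fun s _ => by ring
    _ = ∑ s', d s' * y s' ^ 2 := Finset.sum_congr rfl fun s' _ => by rw [hstat s']

/-- There is a unique `θ` satisfying the projected Bellman fixed-point equation
`Φθ = Π (R + γ P Φ θ)`, and it is the unique global minimizer of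
`MSPBE(θ) = (1/2) ‖Π (R + γ P Φ θ) − Φ θ‖²_D`. -/
theorem stmt_4 {S : Type*} [Fintype S] [DecidableEq S] [Nonempty S]
    (q : ℕ) (hq : 0 < q)
    (P : Matrix S S ℝ)
    (hP0 : ∀ i j, 0 ≤ P i j) (hP1 : ∀ i, ∑ j, P i j = 1)
    (d : S → ℝ) (hd : ∀ s, 0 < d s)
    (hstat : ∀ s', ∑ s, d s * P s s' = d s')
    (γ : ℝ) (hγ0 : 0 < γ) (hγ1 : γ < 1) (R : S → ℝ)
    (Φ : Matrix S (Fin q) ℝ) (hΦ : Φ.rank = q)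
    (Proj : Matrix S S ℝ)
    (hProj : Proj = Φ * (Φᵀ * Matrix.diagonal d * Φ)⁻¹ * Φᵀ * Matrix.diagonal d)
    (MSPBE : (Fin q → ℝ) → ℝ)
    (hMSPBE : ∀ θ, MSPBE θ =
      (1 / 2) * wNorm d (Proj *ᵥ (R + γ • (P *ᵥ (Φ *ᵥ θ))) - Φ *ᵥ θ) ^ 2) :
    ∃ θs : Fin q → ℝ,
      (Φ *ᵥ θs = Proj *ᵥ (R + γ • (P *ᵥ (Φ *ᵥ θs)))) ∧
      (∀ θ : Fin q → ℝ, Φ *ᵥ θ = Proj *ᵥ (R + γ • (P *ᵥ (Φ *ᵥ θ))) → θ = θs) ∧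
      (∀ θ : Fin q → ℝ, θ ≠ θs → MSPBE θs < MSPBE θ) := by
  classical
  set Dm : Matrix S S ℝ := Matrix.diagonal d with hDm
  set M : Matrix (Fin q) (Fin q) ℝ := Φᵀ * Dm * Φ with hMdef
  set N : Matrix (Fin q) (Fin q) ℝ := Φᵀ * Dm * P * Φ with hNdef
  set A : Matrix (Fin q) (Fin q) ℝ := M - γ • N with hAdef
  set b : Fin q → ℝ := Φᵀ *ᵥ (Dm *ᵥ R) with hbdef
  -- Φ has trivial kernel
  have hΦ0 : ∀ x : Fin q → ℝ, Φ *ᵥ x = 0 → x = 0 := by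
    have h1 := LinearMap.finrank_range_add_finrank_ker Φ.mulVecLin
    rw [Matrix.rank] at hΦ
    rw [hΦ, Module.finrank_fin_fun] at h1
    have hker : LinearMap.ker Φ.mulVecLin = ⊥ :=
      Submodule.finrank_eq_zero.mp (by omega)
    intro x hx
    have : x ∈ LinearMap.ker Φ.mulVecLin := by
      simpa [Matrix.mulVecLin] using hx
    rw [hker] at this
    simpa using this
  -- quadratic forms
  have hMq : ∀ x : Fin q → ℝ, x ⬝ᵥ (M *ᵥ x) = ∑ s, d s * (Φ *ᵥ x) s ^ 2 := by
    intro x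
    rw [hMdef, ← Matrix.mulVec_mulVec, ← Matrix.mulVec_mulVec,
      Matrix.dotProduct_mulVec, Matrix.vecMul_transpose, hDm, quad_eq]
  have hNq : ∀ x : Fin q → ℝ,
      x ⬝ᵥ (N *ᵥ x) = ∑ s, d s * ((Φ *ᵥ x) s * (P *ᵥ (Φ *ᵥ x)) s) := by
    intro x
    rw [hNdef, ← Matrix.mulVec_mulVec, ← Matrix.mulVec_mulVec, ← Matrix.mulVec_mulVec,
      Matrix.dotProduct_mulVec, Matrix.vecMul_transpose, hDm, dot_diag]
  -- M is positive definite, hence invertible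
  have hMpos : ∀ x : Fin q → ℝ, x ≠ 0 → 0 < x ⬝ᵥ (M *ᵥ x) := by
    intro x hx
    rw [hMq]
    exact quad_pos hd fun h => hx (hΦ0 x h)
  have hMinj : Function.Injective M.mulVec := by
    intro u v huv
    by_contra h
    have h0 : M *ᵥ (u - v) = 0 := by rw [Matrix.mulVec_sub, huv, sub_self]
    have := hMpos (u - v) (sub_ne_zero.mpr h)
    rw [h0, dotProduct_zero] at this
    exact lt_irrefl 0 this
  have hMdet : IsUnit M.det :=
    (Matrix.isUnit_iff_isUnit_det M).mp (Matrix.mulVec_injective_iff_isUnit.mp hMinj)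
  -- A is positive definite, hence invertible
  have hApos : ∀ x : Fin q → ℝ, x ≠ 0 → 0 < x ⬝ᵥ (A *ᵥ x) := by
    intro x hx
    have hy : Φ *ᵥ x ≠ 0 := fun h => hx (hΦ0 x h)
    set y : S → ℝ := Φ *ᵥ x with hy'
    have hn : 0 < ∑ s, d s * y s ^ 2 := quad_pos hd hy
    have hm0 : 0 ≤ ∑ s, d s * (P *ᵥ y) s ^ 2 :=
      Finset.sum_nonneg fun s _ => mul_nonneg (hd s).le (sq_nonneg _)
    have hm : ∑ s, d s * (P *ᵥ y) s ^ 2 ≤ ∑ s, d s * y s ^ 2 :=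
      contraction hP0 hP1 hstat (fun s => (hd s).le) y
    have hcs : (∑ s, d s * (y s * (P *ᵥ y) s)) ^ 2
        ≤ (∑ s, d s * y s ^ 2) * ∑ s, d s * (P *ᵥ y) s ^ 2 :=
      weighted_cs fun s => (hd s).le
    have hAx : x ⬝ᵥ (A *ᵥ x)
        = (∑ s, d s * y s ^ 2) - γ * ∑ s, d s * (y s * (P *ᵥ y) s) := by
      rw [hAdef, Matrix.sub_mulVec, dotProduct_sub, hMq,
        Matrix.smul_mulVec, dotProduct_smul, hNq, smul_eq_mul]
    rw [hAx]
    have ha2 : (∑ s, d s * (y s * (P *ᵥ y) s)) ^ 2 ≤ (∑ s, d s * y s ^ 2) ^ 2 := by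
      nlinarith [hcs, hm, hn]
    have han : ∑ s, d s * (y s * (P *ᵥ y) s) ≤ ∑ s, d s * y s ^ 2 := by
      nlinarith [ha2, hn]
    nlinarith [han, hn, hγ0, hγ1]
  have hAinj : Function.Injective A.mulVec := by
    intro u v huv
    by_contra h
    have h0 : A *ᵥ (u - v) = 0 := by rw [Matrix.mulVec_sub, huv, sub_self]
    have := hApos (u - v) (sub_ne_zero.mpr h)
    rw [h0, dotProduct_zero] at this
    exact lt_irrefl 0 this
  have hAdet : IsUnit A.det :=
    (Matrix.isUnit_iff_isUnit_det A).mp (Matrix.mulVec_injective_iff_isUnit.mp hAinj)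
  -- key identity
  have hMM : M⁻¹ * M = 1 := Matrix.nonsing_inv_mul M hMdet
  have hMM' : M * M⁻¹ = 1 := Matrix.mul_nonsing_inv M hMdet
  have hMMv : ∀ v : Fin q → ℝ, M⁻¹ *ᵥ (M *ᵥ v) = v := fun v => by
    rw [Matrix.mulVec_mulVec, hMM, Matrix.one_mulVec]
  have hMMv' : ∀ v : Fin q → ℝ, M *ᵥ (M⁻¹ *ᵥ v) = v := fun v => by
    rw [Matrix.mulVec_mulVec, hMM', Matrix.one_mulVec]
  have hkey : ∀ θ : Fin q → ℝ,
      Proj *ᵥ (R + γ • (P *ᵥ (Φ *ᵥ θ))) - Φ *ᵥ θ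
        = Φ *ᵥ (M⁻¹ *ᵥ (b - A *ᵥ θ)) := by
    intro θ
    rw [hProj, hAdef, hNdef, hbdef]
    simp only [Matrix.sub_mulVec, Matrix.smul_mulVec, Matrix.mulVec_add,
      Matrix.mulVec_sub, Matrix.mulVec_smul, ← Matrix.mulVec_mulVec, hMMv]
    abel
  -- the solution
  set θs : Fin q → ℝ := A⁻¹ *ᵥ b with hθs
  have hAA : A * A⁻¹ = 1 := Matrix.mul_nonsing_inv A hAdet
  have hfixb : A *ᵥ θs = b := by
    rw [hθs, Matrix.mulVec_mulVec, hAA, Matrix.one_mulVec]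
  have hres0 : Proj *ᵥ (R + γ • (P *ᵥ (Φ *ᵥ θs))) - Φ *ᵥ θs = 0 := by
    rw [hkey, hfixb, sub_self, Matrix.mulVec_zero, Matrix.mulVec_zero]
  refine ⟨θs, ?_, ?_, ?_⟩
  · exact (sub_eq_zero.mp hres0).symm
  · intro θ hθ
    have h0 : Φ *ᵥ (M⁻¹ *ᵥ (b - A *ᵥ θ)) = 0 := by
      rw [← hkey, hθ.symm, sub_self]
    have h1 : M⁻¹ *ᵥ (b - A *ᵥ θ) = 0 := hΦ0 _ h0
    have h2 : b - A *ᵥ θ = 0 := by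
      have := congrArg (M.mulVec) h1
      rwa [hMMv', Matrix.mulVec_zero] at this
    have h3 : A *ᵥ θ = A *ᵥ θs := by
      rw [hfixb, ← sub_eq_zero.mp h2]
    exact hAinj h3
  · intro θ hθ
    have hzs : MSPBE θs = 0 := by
      rw [hMSPBE, hres0]
      simp [wNorm]
    have hv : Proj *ᵥ (R + γ • (P *ᵥ (Φ *ᵥ θ))) - Φ *ᵥ θ ≠ 0 := by
      rw [hkey]
      intro h0
      apply hθ
      have h1 : M⁻¹ *ᵥ (b - A *ᵥ θ) = 0 := hΦ0 _ h0
      have h2 : b - A *ᵥ θ = 0 := by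
        have := congrArg (M.mulVec) h1
        rwa [hMMv', Matrix.mulVec_zero] at this
      exact hAinj (by rw [hfixb, ← sub_eq_zero.mp h2])
    have hpos : 0 < MSPBE θ := by
      rw [hMSPBE]
      have : 0 < wNorm d (Proj *ᵥ (R + γ • (P *ᵥ (Φ *ᵥ θ))) - Φ *ᵥ θ) := by
        rw [wNorm, quad_eq]
        exact Real.sqrt_pos.mpr (quad_pos hd hv)
      positivity
    rw [hzs]
    exact hpos
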